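/- arXiv:2308.09211 — 6 statements merged into one kernel-verified Lean document; each statement's English description precedes it below -/
import Mathlib

section
/- Let S be a finite state set, A a finite action set, and q, q' : S × A → Δ(S) transition kernels such that for every pure Markov strategy profile a = (a_s)_{s∈S} ∈ A^{|S|}, both q(·|·, a_·) and q'(·|·, a_·) induce irreducible Markov chains on S with the same (unique) invariant distribution π(a). Let α̃ : S → ℝ^{|A|} satisfy Σ_{a∈A} α̃_s(a) = 1 for each s, and let β̃ ∈ ℝ^{|S|} satisfy Σ_{s∈S} Σ_{a∈A} β̃_s α̃_s(a) q(t|s,a) = β̃_t for all t ∈ S. Then Σ_{s∈S} Σ_{a∈A} β̃_s α̃_s(a) q'(t|s,a) = β̃_t for all t ∈ S. -/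
open Finset
open Matrix

lemma powEntryNonneg {S : Type} [Fintype S] [DecidableEq S] {P : Matrix S S ℝ}
    (hP : ∀ s t, 0 ≤ P s t) : ∀ n s t, 0 ≤ (P ^ n) s t := by
  intro n
  induction n with
  | zero => intro s t; simp [Matrix.one_apply]; split_ifs <;> norm_num
  | succ n ih =>
      intro s t
      rw [pow_succ, Matrix.mul_apply]
      exact Finset.sum_nonneg fun u _ => mul_nonneg (ih s u) (hP u t)

lemma invPow {S : Type} [Fintype S] [DecidableEq S] {P : Matrix S S ℝ}
    {ν : S → ℝ} (hν : ∀ t, ∑ s, ν s * P s t = ν t) :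
    ∀ n t, ∑ s, ν s * (P ^ n) s t = ν t := by
  intro n
  induction n with
  | zero => intro t; simp [Matrix.one_apply, mul_ite, Finset.sum_ite_eq']
  | succ n ih =>
      intro t
      have h : ∀ s, (P ^ (n+1)) s t = ∑ u, (P ^ n) s u * P u t := by
        intro s; rw [pow_succ, Matrix.mul_apply]
      simp_rw [h, Finset.mul_sum, ← mul_assoc]
      rw [Finset.sum_comm]
      simp_rw [← Finset.sum_mul, ih]
      exact hν t

lemma uniqueInvariant {S : Type} [Fintype S] [DecidableEq S] [Nonempty S]
    (P : Matrix S S ℝ) (hP0 : ∀ s t, 0 ≤ P s t)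
    (π₀ : S → ℝ) (hπ : ∀ s, 0 < π₀ s)
    (hinvπ : ∀ t, ∑ s, π₀ s * P s t = π₀ t)
    (hirr : ∀ s t, ∃ n, 0 < n ∧ 0 < (P ^ n) s t)
    (μ : S → ℝ) (hμ : ∀ t, ∑ s, μ s * P s t = μ t) :
    ∃ c : ℝ, μ = c • π₀ := by
  obtain ⟨s₀, -, hs₀⟩ := Finset.exists_min_image Finset.univ (fun s => μ s / π₀ s)
    ⟨Classical.arbitrary S, Finset.mem_univ _⟩
  set c := μ s₀ / π₀ s₀ with hc
  set ν : S → ℝ := fun s => μ s - c * π₀ s with hν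
  have hνnn : ∀ s, 0 ≤ ν s := by
    intro s
    have h1 : c ≤ μ s / π₀ s := hs₀ s (Finset.mem_univ s)
    have h2 : c * π₀ s ≤ μ s := (le_div_iff₀ (hπ s)).mp h1
    simp only [hν]; linarith
  have hνinv : ∀ t, ∑ s, ν s * P s t = ν t := by
    intro t
    simp only [hν, sub_mul, Finset.sum_sub_distrib, hμ t, mul_assoc, ← Finset.mul_sum, hinvπ t]
  have hν0 : ν s₀ = 0 := by
    simp [hν, hc, div_mul_cancel₀ _ (ne_of_gt (hπ s₀))]
  have hνzero : ∀ s, ν s = 0 := by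
    intro s
    obtain ⟨n, hn, hpos⟩ := hirr s s₀
    have hsum := invPow hνinv n s₀
    have hle : ν s * (P ^ n) s s₀ ≤ ∑ s', ν s' * (P ^ n) s' s₀ :=
      Finset.single_le_sum (fun s' _ => mul_nonneg (hνnn s') (powEntryNonneg hP0 n s' s₀))
        (Finset.mem_univ s)
    rw [hsum, hν0] at hle
    have := mul_nonneg (hνnn s) (le_of_lt hpos)
    have h0 : ν s * (P ^ n) s s₀ = 0 := le_antisymm hle this
    rcases mul_eq_zero.mp h0 with h | h
    · exact h
    · exact absurd h (ne_of_gt hpos)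
  refine ⟨c, funext fun s => ?_⟩
  have := hνzero s
  simp [hν] at this
  simpa using by linarith
lemma solvePoisson {S : Type} [Fintype S] [DecidableEq S] [Nonempty S]
    (P : Matrix S S ℝ) (hP0 : ∀ s t, 0 ≤ P s t)
    (π₀ : S → ℝ) (hπ : ∀ s, 0 < π₀ s)
    (hinvπ : ∀ t, ∑ s, π₀ s * P s t = π₀ t)
    (hirr : ∀ s t, ∃ n, 0 < n ∧ 0 < (P ^ n) s t)
    (x : S → ℝ) (hx : ∑ s, π₀ s * x s = 0) :
    ∃ y : S → ℝ, ∀ s, y s - ∑ u, P s u * y u = x s := by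
  set M : Matrix S S ℝ := 1 - P with hM
  have hMT : ∀ (μ : S → ℝ) t, Mᵀ.mulVec μ t = μ t - ∑ s, μ s * P s t := by
    intro μ t
    simp only [Matrix.mulVec, dotProduct, Matrix.transpose_apply, hM,
      Matrix.sub_apply, Matrix.one_apply, sub_mul, Finset.sum_sub_distrib]
    congr 1
    · simp [Finset.sum_ite_eq, eq_comm]
    · exact Finset.sum_congr rfl fun s _ => mul_comm _ _
  have hπ0ne : π₀ ≠ 0 := by
    intro h
    exact absurd (congrFun h (Classical.arbitrary S)) (ne_of_gt (hπ _))
  have hkerchar : ∀ μ : S → ℝ, Mᵀ.mulVec μ = 0 ↔ ∃ c : ℝ, μ = c • π₀ := by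
    intro μ
    constructor
    · intro h
      apply uniqueInvariant P hP0 π₀ hπ hinvπ hirr μ
      intro t
      have := congrFun h t
      rw [hMT] at this
      simp only [Pi.zero_apply] at this
      linarith
    · rintro ⟨c, rfl⟩
      funext t
      rw [hMT]
      simp only [Pi.smul_apply, smul_eq_mul, Pi.zero_apply, mul_assoc, ← Finset.mul_sum]
      rw [hinvπ t]; ring
  have hker : LinearMap.ker (Mᵀ.mulVecLin) = Submodule.span ℝ {π₀} := by
    ext μ
    rw [LinearMap.mem_ker, Matrix.mulVecLin_apply, Submodule.mem_span_singleton, hkerchar μ]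
    exact exists_congr fun c => eq_comm
  have h1 : Module.finrank ℝ (LinearMap.ker (Mᵀ.mulVecLin)) = 1 := by
    rw [hker]; exact finrank_span_singleton hπ0ne
  have h2 := LinearMap.finrank_range_add_finrank_ker (Mᵀ.mulVecLin)
  rw [h1] at h2
  have h3 : Module.finrank ℝ (LinearMap.range M.mulVecLin)
      = Module.finrank ℝ (LinearMap.range Mᵀ.mulVecLin) := (Matrix.rank_transpose M).symm
  set f : (S → ℝ) →ₗ[ℝ] ℝ :=
    { toFun := fun y => ∑ s, π₀ s * y s
      map_add' := by intro y z; simp [mul_add, Finset.sum_add_distrib]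
      map_smul' := by intro c y; simp [Finset.mul_sum, mul_left_comm] } with hf
  have hfπ : f π₀ ≠ 0 := by
    have : 0 < ∑ s, π₀ s * π₀ s :=
      Finset.sum_pos (fun s _ => mul_pos (hπ s) (hπ s)) Finset.univ_nonempty
    simp only [hf, LinearMap.coe_mk, AddHom.coe_mk]
    linarith
  have hfrange : Module.finrank ℝ (LinearMap.range f) = 1 := by
    refine le_antisymm ?_ ?_
    · simpa using Submodule.finrank_le (LinearMap.range f)
    · rw [Nat.one_le_iff_ne_zero]
      intro h0
      have hb : LinearMap.range f = ⊥ := Submodule.finrank_eq_zero.mp h0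
      have : f π₀ ∈ LinearMap.range f := LinearMap.mem_range_self f π₀
      rw [hb, Submodule.mem_bot] at this
      exact hfπ this
  have h4 := LinearMap.finrank_range_add_finrank_ker f
  rw [hfrange] at h4
  have hle : LinearMap.range M.mulVecLin ≤ LinearMap.ker f := by
    rintro z ⟨y, rfl⟩
    rw [LinearMap.mem_ker]
    show (∑ s, π₀ s * (M.mulVecLin y) s) = 0
    have : (∑ s, π₀ s * (M.mulVecLin y) s) = π₀ ⬝ᵥ (M *ᵥ y) := rfl
    rw [this, Matrix.dotProduct_mulVec]
    have hv : π₀ ᵥ* M = 0 := by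
      rw [← Matrix.mulVec_transpose]
      exact (hkerchar π₀).mpr ⟨1, by simp⟩
    rw [hv, zero_dotProduct]
  have heq : LinearMap.range M.mulVecLin = LinearMap.ker f :=
    Submodule.eq_of_le_of_finrank_le hle (by omega)
  have hx' : x ∈ LinearMap.ker f := by rw [LinearMap.mem_ker]; exact hx
  rw [← heq] at hx'
  obtain ⟨y, hy⟩ := hx'
  refine ⟨y, fun s => ?_⟩
  have := congrFun hy s
  rw [Matrix.mulVecLin_apply] at this
  rw [← this]
  simp only [Matrix.mulVec, dotProduct, hM, Matrix.sub_apply, Matrix.one_apply, sub_mul,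
    Finset.sum_sub_distrib]
  congr 1
  simp [Finset.sum_ite_eq, eq_comm]

theorem stmt_0 {S A : Type} [Fintype S] [DecidableEq S] [Nonempty S] [Fintype A] [Nonempty A]
    (q q' : S → A → S → ℝ)
    (hq0 : ∀ s a t, 0 ≤ q s a t) (hq1 : ∀ s a, ∑ t, q s a t = 1)
    (hq'0 : ∀ s a t, 0 ≤ q' s a t) (hq'1 : ∀ s a, ∑ t, q' s a t = 1)
    (π : (S → A) → S → ℝ)
    (hπpos : ∀ m s, 0 < π m s)
    (hπsum : ∀ m, ∑ s, π m s = 1)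
    (hinv : ∀ m : S → A, ∀ t, ∑ s, π m s * q s (m s) t = π m t)
    (hinv' : ∀ m : S → A, ∀ t, ∑ s, π m s * q' s (m s) t = π m t)
    (hirr : ∀ m : S → A, ∀ s t : S, ∃ n : ℕ, 0 < n ∧
      0 < ((Matrix.of fun s' t' => q s' (m s') t') ^ n) s t)
    (hirr' : ∀ m : S → A, ∀ s t : S, ∃ n : ℕ, 0 < n ∧
      0 < ((Matrix.of fun s' t' => q' s' (m s') t') ^ n) s t)
    (α : S → A → ℝ) (hα : ∀ s, ∑ a, α s a = 1)
    (β : S → ℝ) (hβ : ∀ t, ∑ s, ∑ a, β s * α s a * q s a t = β t) :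
    ∀ t, ∑ s, ∑ a, β s * α s a * q' s a t = β t := by
  intro t
  obtain ⟨a₀⟩ := ‹Nonempty A›
  set x : S → A → ℝ := fun s a => (if s = t then (1:ℝ) else 0) - q' s a t with hxdef
  have claimA : ∀ m : S → A, ∑ s, π m s * x s (m s) = 0 := by
    intro m
    simp only [hxdef, mul_sub, Finset.sum_sub_distrib, hinv' m t]
    have h : ∑ s, π m s * (if s = t then (1:ℝ) else 0) = π m t := by
      simp [mul_ite, Finset.sum_ite_eq']
    rw [h, sub_self]
  obtain ⟨y, hy⟩ := solvePoisson (Matrix.of fun s u => q s a₀ u) (fun s u => hq0 s a₀ u)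
    (π (fun _ => a₀)) (hπpos _) (fun u => hinv (fun _ => a₀) u)
    (fun s u => hirr (fun _ => a₀) s u) (fun s => x s a₀) (claimA (fun _ => a₀))
  simp only [Matrix.of_apply] at hy
  have hall : ∀ s a, y s - ∑ u, q s a u * y u = x s a := by
    intro s a
    set m : S → A := Function.update (fun _ => a₀) s a with hm
    have hms : m s = a := by rw [hm]; simp
    have hmne : ∀ s', s' ≠ s → m s' = a₀ := by
      intro s' h; rw [hm, Function.update_apply]; simp [h]
    have h0 : ∑ s', π m s' * (y s' - (∑ u, q s' (m s') u * y u) - x s' (m s')) = 0 := by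
      simp only [mul_sub, Finset.sum_sub_distrib]
      have hA : ∑ s', π m s' * ∑ u, q s' (m s') u * y u = ∑ s', π m s' * y s' := by
        simp_rw [Finset.mul_sum, ← mul_assoc]
        rw [Finset.sum_comm]
        simp_rw [← Finset.sum_mul, hinv m]
      rw [hA, claimA m, sub_self, sub_zero]
    have h1 : π m s * (y s - (∑ u, q s (m s) u * y u) - x s (m s)) = 0 := by
      rw [← h0]
      symm
      apply Finset.sum_eq_single_of_mem s (Finset.mem_univ s)
      intro s' _ hne
      rw [hmne s' hne]
      have h2 := hy s'
      have h3 : y s' - (∑ u, q s' a₀ u * y u) - x s' a₀ = 0 := by rw [h2, sub_self]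
      rw [h3, mul_zero]
    have h4 := mul_eq_zero.mp h1
    rcases h4 with h | h
    · exact absurd h (ne_of_gt (hπpos m s))
    · rw [hms] at h; linarith
  have hq'rw : ∀ s a, q' s a t = (if s = t then (1:ℝ) else 0) - (y s - ∑ u, q s a u * y u) := by
    intro s a
    rw [hall s a, hxdef]
    ring
  have e1 : ∑ s, ∑ a, β s * α s a * (if s = t then (1:ℝ) else 0) = β t := by
    have h : ∀ s, ∑ a, β s * α s a * (if s = t then (1:ℝ) else 0) = if s = t then β s else 0 := by
      intro s
      split_ifs with hst
      · simp only [mul_one, ← Finset.mul_sum, hα s]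
      · simp
    simp_rw [h]
    simp [Finset.sum_ite_eq']
  have e2 : ∑ s, ∑ a, β s * α s a * y s = ∑ s, β s * y s := by
    refine Finset.sum_congr rfl fun s _ => ?_
    have : ∀ a, β s * α s a * y s = (β s * y s) * α s a := fun a => by ring
    simp_rw [this, ← Finset.mul_sum, hα s, mul_one]
  have e3 : ∑ s, ∑ a, β s * α s a * (∑ u, q s a u * y u) = ∑ u, β u * y u := by
    calc ∑ s, ∑ a, β s * α s a * (∑ u, q s a u * y u)
        = ∑ s, ∑ a, ∑ u, (β s * α s a * q s a u) * y u := by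
          simp_rw [Finset.mul_sum, ← mul_assoc]
      _ = ∑ s, ∑ u, ∑ a, (β s * α s a * q s a u) * y u :=
          Finset.sum_congr rfl fun s _ => Finset.sum_comm
      _ = ∑ u, ∑ s, ∑ a, (β s * α s a * q s a u) * y u := Finset.sum_comm
      _ = ∑ u, (∑ s, ∑ a, β s * α s a * q s a u) * y u := by
          simp_rw [Finset.sum_mul]
      _ = ∑ u, β u * y u := by simp_rw [hβ]
  simp_rw [hq'rw, mul_sub, Finset.sum_sub_distrib]
  rw [e1, e2, e3, sub_self, sub_zero]
end

section
/- Let S, A be finite sets and q : S × A → Δ(S) such that every pure Markov strategy profile a ∈ A^{|S|} induces an irreducible Markov chain with unique invariant distribution π(a) ∈ Δ(S). Let α̃ : S → ℝ^{|A|} with Σ_a α̃_s(a) = 1 for all s, and β̃ ∈ ℝ^{|S|} invariant under α̃ with q (i.e., Σ_{s,a} β̃_s α̃_s(a) q(t|s,a) = β̃_t for all t). Then there exists k : A^{|S|} → ℝ such that for every s ∈ S and a ∈ A, β̃_s α̃_s(a) = Σ_{a=(a_{s'})_{s'} : a_s = a} k(a) π_s(a). -/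
open Finset
open Matrix
open scoped Matrix

lemma pow_nonneg' {S : Type} [Fintype S] [DecidableEq S] (P : Matrix S S ℝ)
    (h0 : ∀ s t, 0 ≤ P s t) : ∀ n : ℕ, ∀ s t, 0 ≤ (P ^ n) s t := by
  intro n
  induction n with
  | zero => intro s t; simp [Matrix.one_apply]; positivity
  | succ n ih =>
    intro s t
    rw [pow_succ, Matrix.mul_apply]
    exact Finset.sum_nonneg fun u _ => mul_nonneg (ih s u) (h0 u t)

lemma pow_rowsum {S : Type} [Fintype S] [DecidableEq S] (P : Matrix S S ℝ)
    (h1 : ∀ s, ∑ t, P s t = 1) : ∀ n : ℕ, ∀ s, ∑ t, (P ^ n) s t = 1 := by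
  intro n
  induction n with
  | zero => intro s; simp [Matrix.one_apply]
  | succ n ih =>
    intro s
    simp only [pow_succ, Matrix.mul_apply]
    rw [Finset.sum_comm]
    calc ∑ u, ∑ t, (P ^ n) s u * P u t = ∑ u, (P ^ n) s u * ∑ t, P u t := by
          simp [Finset.mul_sum]
      _ = 1 := by simp [h1, ih s]

lemma pow_harmonic {S : Type} [Fintype S] [DecidableEq S] (P : Matrix S S ℝ)
    (h : S → ℝ) (hh : P *ᵥ h = h) : ∀ n : ℕ, (P ^ n) *ᵥ h = h := by
  intro n
  induction n with
  | zero => simp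
  | succ n ih => rw [pow_succ, ← Matrix.mulVec_mulVec, hh, ih]

lemma harmonic_const {S : Type} [Fintype S] [DecidableEq S] [Nonempty S] (P : Matrix S S ℝ)
    (h0 : ∀ s t, 0 ≤ P s t) (h1 : ∀ s, ∑ t, P s t = 1)
    (hirr : ∀ s t, ∃ n : ℕ, 0 < n ∧ 0 < (P ^ n) s t)
    (h : S → ℝ) (hh : P *ᵥ h = h) : ∀ s t : S, h s = h t := by
  obtain ⟨s', -, hs'⟩ := Finset.exists_max_image (Finset.univ : Finset S) h ⟨Classical.arbitrary S, Finset.mem_univ _⟩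
  have key : ∀ t, h t = h s' := by
    intro t
    obtain ⟨n, -, hn⟩ := hirr s' t
    have hsum : ∑ u, (P ^ n) s' u * (h s' - h u) = 0 := by
      have e1 : ∑ u, (P ^ n) s' u * h u = h s' := by
        have := congrFun (pow_harmonic P h hh n) s'
        simpa [Matrix.mulVec, dotProduct] using this
      have e2 : ∑ u, (P ^ n) s' u * h s' = h s' := by
        rw [← Finset.sum_mul, pow_rowsum P h1 n, one_mul]
      simp [mul_sub, Finset.sum_sub_distrib, e1, e2]
    have hterm : ∀ u ∈ Finset.univ, (0:ℝ) ≤ (P ^ n) s' u * (h s' - h u) :=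
      fun u _ => mul_nonneg (pow_nonneg' P h0 n s' u) (sub_nonneg.2 (hs' u (Finset.mem_univ u)))
    have := (Finset.sum_eq_zero_iff_of_nonneg hterm).1 hsum t (Finset.mem_univ t)
    have := (mul_eq_zero.1 this).resolve_left (ne_of_gt hn)
    linarith
  intro s t; rw [key s, key t]

lemma poisson {S : Type} [Fintype S] [DecidableEq S] [Nonempty S] (P : Matrix S S ℝ)
    (h0 : ∀ s t, 0 ≤ P s t) (h1 : ∀ s, ∑ t, P s t = 1)
    (hirr : ∀ s t, ∃ n : ℕ, 0 < n ∧ 0 < (P ^ n) s t)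
    (w : S → ℝ) (hwsum : ∑ s, w s = 1) (hwinv : ∀ t, ∑ s, w s * P s t = w t)
    (c : S → ℝ) (hc : ∑ s, w s * c s = 0) :
    ∃ h : S → ℝ, ∀ s, h s - ∑ t, P s t * h t = c s := by
  classical
  set L : (S → ℝ) →ₗ[ℝ] (S → ℝ) := LinearMap.id - P.mulVecLin with hL
  have hLapp : ∀ v : S → ℝ, ∀ s, L v s = v s - ∑ t, P s t * v t := by
    intro v s
    simp [hL, Matrix.mulVecLin, Matrix.mulVec, dotProduct]
  set φ : (S → ℝ) →ₗ[ℝ] ℝ :=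
    { toFun := fun v => ∑ s, w s * v s
      map_add' := by intro x y; simp [mul_add, Finset.sum_add_distrib]
      map_smul' := by intro r x; simp [Finset.mul_sum]; ring_nf; simp [Finset.mul_sum, mul_comm, mul_left_comm] } with hφ
  -- kernel of L = constants
  have hker : LinearMap.ker L = Submodule.span ℝ {fun _ : S => (1:ℝ)} := by
    apply le_antisymm
    · intro v hv
      have hPv : P *ᵥ v = v := by
        funext s
        have := (LinearMap.mem_ker.1 hv)
        have h2 := congrFun this s
        rw [hLapp] at h2
        have : (P *ᵥ v) s = ∑ t, P s t * v t := by
          simp [Matrix.mulVec, dotProduct]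
        rw [this]
        simp only [Pi.zero_apply] at h2
        linarith
      have hconst := harmonic_const P h0 h1 hirr v hPv
      have : v = (v (Classical.arbitrary S)) • (fun _ : S => (1:ℝ)) := by
        funext s; simp [hconst s (Classical.arbitrary S)]
      rw [this]
      exact Submodule.smul_mem _ _ (Submodule.mem_span_singleton_self _)
    · rw [Submodule.span_le]
      intro v hv
      simp only [Set.mem_singleton_iff] at hv
      subst hv
      simp only [SetLike.mem_coe, LinearMap.mem_ker]
      funext s
      simp [hLapp, h1 s]
  have hkerrank : Module.finrank ℝ (LinearMap.ker L) = 1 := by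
    rw [hker]
    exact finrank_span_singleton (by
      intro h
      have := congrFun h (Classical.arbitrary S)
      simp at this)
  have htot : Module.finrank ℝ (S → ℝ) = Fintype.card S := by
    simp [Module.finrank_fintype_fun_eq_card]
  have hrangerank : Module.finrank ℝ (LinearMap.range L) = Fintype.card S - 1 := by
    have := LinearMap.finrank_range_add_finrank_ker L
    rw [hkerrank, htot] at this
    omega
  -- kernel of phi has the same rank
  have hφ1 : φ (fun _ => (1:ℝ)) = 1 := by simp [hφ, hwsum]
  have hφsurj : LinearMap.range φ = ⊤ := by
    rw [LinearMap.range_eq_top]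
    intro r
    refine ⟨r • (fun _ => (1:ℝ)), ?_⟩
    show (∑ s, w s * (r • fun _ => (1:ℝ)) s) = r
    simp only [Pi.smul_apply, smul_eq_mul, mul_one]
    calc ∑ s, w s * r = (∑ s, w s) * r := by rw [Finset.sum_mul]
      _ = r := by rw [hwsum, one_mul]
  have hφker : Module.finrank ℝ (LinearMap.ker φ) = Fintype.card S - 1 := by
    have := LinearMap.finrank_range_add_finrank_ker φ
    rw [hφsurj, htot] at this
    simp [finrank_top] at this
    omega
  have hle : LinearMap.range L ≤ LinearMap.ker φ := by
    rintro - ⟨v, rfl⟩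
    rw [LinearMap.mem_ker]
    show ∑ s, w s * (L v s) = 0
    have : ∀ s, w s * (L v s) = w s * v s - ∑ t, (w s * P s t) * v t := by
      intro s
      rw [hLapp]
      rw [mul_sub, Finset.mul_sum]
      ring_nf
    rw [Finset.sum_congr rfl (fun s _ => this s), Finset.sum_sub_distrib]
    rw [Finset.sum_comm]
    have : ∀ t, ∑ s, (w s * P s t) * v t = w t * v t := by
      intro t
      rw [← Finset.sum_mul, hwinv t]
    rw [Finset.sum_congr rfl (fun t _ => this t)]
    ring
  have heq : LinearMap.range L = LinearMap.ker φ :=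
    Submodule.eq_of_le_of_finrank_le hle (by rw [hφker, hrangerank])
  have hcmem : c ∈ LinearMap.range L := by
    rw [heq, LinearMap.mem_ker]
    exact hc
  obtain ⟨h, hh⟩ := hcmem
  exact ⟨h, fun s => by rw [← hh, hLapp]⟩

lemma key {S A : Type} [Fintype S] [DecidableEq S] [Nonempty S]
    [Fintype A] [DecidableEq A] [Nonempty A]
    (q : S → A → S → ℝ)
    (hq0 : ∀ s a t, 0 ≤ q s a t) (hq1 : ∀ s a, ∑ t, q s a t = 1)
    (π : (S → A) → S → ℝ)
    (hπpos : ∀ m s, 0 < π m s)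
    (hπsum : ∀ m, ∑ s, π m s = 1)
    (hinv : ∀ m : S → A, ∀ t, ∑ s, π m s * q s (m s) t = π m t)
    (hirr : ∀ m : S → A, ∀ s t : S, ∃ n : ℕ, 0 < n ∧
      0 < ((Matrix.of fun s' t' => q s' (m s') t') ^ n) s t)
    (c : S → A → ℝ)
    (hc : ∀ m : S → A, ∑ s, π m s * c s (m s) = 0) :
    ∃ h : S → ℝ, ∀ s a, c s a = h s - ∑ t, q s a t * h t := by
  classical
  set m0 : S → A := fun _ => Classical.arbitrary A with hm0
  set P : Matrix S S ℝ := Matrix.of fun s t => q s (m0 s) t with hP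
  obtain ⟨h, hh⟩ := poisson P (fun s t => hq0 s (m0 s) t) (fun s => hq1 s (m0 s))
    (hirr m0) (π m0) (hπsum m0) (fun t => hinv m0 t) (fun s => c s (m0 s)) (hc m0)
  refine ⟨h, fun s0 a => ?_⟩
  set m' : S → A := Function.update m0 s0 a with hm'
  have hm's0 : m' s0 = a := Function.update_self s0 a m0
  have hm'ne : ∀ s, s ≠ s0 → m' s = m0 s := fun s hs => Function.update_of_ne hs a m0
  -- the big sum is zero
  have hE : ∑ s, π m' s * (c s (m' s) - (h s - ∑ t, q s (m' s) t * h t)) = 0 := by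
    have e1 : ∑ s, π m' s * c s (m' s) = 0 := hc m'
    have e2 : ∑ s, π m' s * (h s - ∑ t, q s (m' s) t * h t) = 0 := by
      have : ∀ s, π m' s * (h s - ∑ t, q s (m' s) t * h t)
          = π m' s * h s - ∑ t, (π m' s * q s (m' s) t) * h t := by
        intro s; rw [mul_sub, Finset.mul_sum]; ring_nf
      rw [Finset.sum_congr rfl (fun s _ => this s), Finset.sum_sub_distrib, Finset.sum_comm]
      have : ∀ t, ∑ s, (π m' s * q s (m' s) t) * h t = π m' t * h t := by
        intro t; rw [← Finset.sum_mul, hinv m' t]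
      rw [Finset.sum_congr rfl (fun t _ => this t)]
      ring
    calc ∑ s, π m' s * (c s (m' s) - (h s - ∑ t, q s (m' s) t * h t))
        = ∑ s, (π m' s * c s (m' s) - π m' s * (h s - ∑ t, q s (m' s) t * h t)) := by
          apply Finset.sum_congr rfl; intro s _; ring
      _ = 0 := by rw [Finset.sum_sub_distrib, e1, e2]; ring
  -- all terms except s0 vanish
  have hsingle : ∑ s, π m' s * (c s (m' s) - (h s - ∑ t, q s (m' s) t * h t))
      = π m' s0 * (c s0 a - (h s0 - ∑ t, q s0 a t * h t)) := by
    rw [Finset.sum_eq_single s0]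
    · rw [hm's0]
    · intro s _ hs
      have hms : m' s = m0 s := hm'ne s hs
      rw [hms]
      have : h s - ∑ t, q s (m0 s) t * h t = c s (m0 s) := by
        have := hh s
        simpa [hP] using this
      rw [this]
      ring
    · intro habs; exact absurd (Finset.mem_univ s0) habs
  rw [hsingle] at hE
  have := (mul_eq_zero.1 hE).resolve_left (ne_of_gt (hπpos m' s0))
  linarith

theorem stmt_1 {S A : Type} [Fintype S] [DecidableEq S] [Nonempty S]
    [Fintype A] [DecidableEq A] [Nonempty A]
    (q : S → A → S → ℝ)
    (hq0 : ∀ s a t, 0 ≤ q s a t) (hq1 : ∀ s a, ∑ t, q s a t = 1)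
    (π : (S → A) → S → ℝ)
    (hπpos : ∀ m s, 0 < π m s)
    (hπsum : ∀ m, ∑ s, π m s = 1)
    (hinv : ∀ m : S → A, ∀ t, ∑ s, π m s * q s (m s) t = π m t)
    (hirr : ∀ m : S → A, ∀ s t : S, ∃ n : ℕ, 0 < n ∧
      0 < ((Matrix.of fun s' t' => q s' (m s') t') ^ n) s t)
    (α : S → A → ℝ) (hα : ∀ s, ∑ a, α s a = 1)
    (β : S → ℝ) (hβ : ∀ t, ∑ s, ∑ a, β s * α s a * q s a t = β t) :
    ∃ k : (S → A) → ℝ, ∀ s a,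
      β s * α s a = ∑ m ∈ Finset.univ.filter (fun m : S → A => m s = a), k m * π m s := by
  classical
  set E := EuclideanSpace ℝ (S × A) with hE
  set e : (S → A) → E := fun m => WithLp.toLp 2 (fun p : S × A => if m p.1 = p.2 then π m p.1 else 0) with he
  set x : E := WithLp.toLp 2 (fun p : S × A => β p.1 * α p.1 p.2) with hx
  set W : Submodule ℝ E := Submodule.span ℝ (Set.range e) with hW
  have hxW : x ∈ W := by
    rw [hW, ← Submodule.orthogonal_orthogonal (Submodule.span ℝ (Set.range e))]
    rw [Submodule.mem_orthogonal]
    intro v hv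
    set c : S → A → ℝ := fun s a => v (s, a) with hc
    have hcorth : ∀ m : S → A, ∑ s, π m s * c s (m s) = 0 := by
      intro m
      have hem : e m ∈ Submodule.span ℝ (Set.range e) :=
        Submodule.subset_span (Set.mem_range_self m)
      have := (Submodule.mem_orthogonal _ v).1 hv (e m) hem
      rw [← this]
      rw [PiLp.inner_apply]
      rw [Fintype.sum_prod_type]
      apply Finset.sum_congr rfl
      intro s _
      have : ∀ a : A, (inner ℝ (e m (s, a)) (v (s, a)) : ℝ)
          = if m s = a then π m s * v (s, a) else 0 := by
        intro a
        simp only [he, RCLike.inner_apply, conj_trivial]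
        by_cases hsa : m s = a <;> simp [hsa, mul_comm]
      rw [Finset.sum_congr rfl (fun a _ => this a)]
      rw [Finset.sum_ite_eq]
      simp [hc]
    obtain ⟨h, hh⟩ := key q hq0 hq1 π hπpos hπsum hinv hirr c hcorth
    -- now show inner v x = 0
    rw [PiLp.inner_apply]
    have expand : ∀ p : S × A, (inner ℝ (v p) (x p) : ℝ)
        = β p.1 * α p.1 p.2 * h p.1 - ∑ t, (β p.1 * α p.1 p.2 * q p.1 p.2 t) * h t := by
      rintro ⟨s, a⟩
      simp only [RCLike.inner_apply, conj_trivial, hx]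
      rw [mul_comm (β s * α s a) (v (s, a))]
      have : v (s, a) = h s - ∑ t, q s a t * h t := hh s a
      rw [this, sub_mul, Finset.sum_mul]
      congr 1
      · ring
      · exact Finset.sum_congr rfl fun t _ => by ring
    rw [Finset.sum_congr rfl (fun p _ => expand p), Finset.sum_sub_distrib]
    have e1 : ∑ p : S × A, β p.1 * α p.1 p.2 * h p.1 = ∑ s, β s * h s := by
      rw [Fintype.sum_prod_type]
      apply Finset.sum_congr rfl
      intro s _
      show ∑ y : A, β s * α s y * h s = β s * h s
      rw [← Finset.sum_mul, ← Finset.mul_sum, hα s, mul_one]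
    have e2 : ∑ p : S × A, ∑ t, (β p.1 * α p.1 p.2 * q p.1 p.2 t) * h t = ∑ s, β s * h s := by
      rw [Fintype.sum_prod_type]
      show ∑ s, ∑ a, ∑ t, (β s * α s a * q s a t) * h t = ∑ s, β s * h s
      have swap1 : ∀ s : S, ∑ a : A, ∑ t : S, (β s * α s a * q s a t) * h t
          = ∑ t : S, ∑ a : A, (β s * α s a * q s a t) * h t := fun s => Finset.sum_comm
      rw [Finset.sum_congr rfl (fun s _ => swap1 s), Finset.sum_comm]
      apply Finset.sum_congr rfl
      intro t _
      have : ∀ s : S, ∑ a : A, (β s * α s a * q s a t) * h t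
          = (∑ a : A, β s * α s a * q s a t) * h t := fun s => (Finset.sum_mul _ _ _).symm
      rw [Finset.sum_congr rfl (fun s _ => this s), ← Finset.sum_mul, hβ t]
    rw [e1, e2, sub_self]
  -- extract coefficients
  rw [hW] at hxW
  obtain ⟨k, hk⟩ := (Submodule.mem_span_range_iff_exists_fun ℝ).1 hxW
  refine ⟨k, fun s a => ?_⟩
  have happ2 : (∑ m : S → A, k m • e m) (s, a) = ∑ m : S → A, k m * e m (s, a) :=
    by rw [WithLp.ofLp_sum, Finset.sum_apply]; rfl
  have hxval : x (s, a) = β s * α s a := rfl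
  rw [← hxval, ← hk, happ2, Finset.sum_filter]
  apply Finset.sum_congr rfl
  intro m _
  show k m * (if m s = a then π m s else 0) = _
  by_cases hm : m s = a <;> simp [hm]
end

section
/- Let Y, Y' be finite signal sets, S a finite state set, A an action set, and f(·|s,t,a) ∈ Δ(Y), f'(·|s,t',a) ∈ Δ(Y') conditional signal distributions, with q(·|s) ∈ Δ(S) a transition distribution with support S(s). Suppose for each s ∈ S there is a map T_s : S(s) → S(s) and, for each t ∈ S(s), nonnegative weights γ_{st}^{y'} ≥ 0 and distributions φ_{st}(·|y') ∈ Δ(Y) for each y' ∈ Y' such that f(y|s,t,a) = Σ_{y'∈Y'} γ_{st}^{y'} φ_{st}(y|y') f'(y'|s, T_s(t), a) for all y ∈ Y, a ∈ A. Define p(t,y|s,a) = f(y|s,t,a) q(t|s) and p'(t',y'|s,a) = f'(y'|s,t',a) q(t'|s). Then for each s ∈ S there exist weights γ_s^{t',y'} ≥ 0 and distributions φ_s(·,·|t',y') ∈ Δ(S × Y) such that p(t,y|s,a) = Σ_{(t',y')∈S×Y'} γ_s^{t',y'} φ_s(t,y|t',y') p'(t',y'|s,a) for all (t,y) ∈ S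 × Y and all a ∈ A. -/
open Finset

theorem stmt_6 {S Y Y' A : Type} [Fintype S] [Fintype Y] [Fintype Y']
    (f : S → S → A → Y → ℝ) (f' : S → S → A → Y' → ℝ)
    (hf0 : ∀ s t a y, 0 ≤ f s t a y) (hf1 : ∀ s t a, ∑ y, f s t a y = 1)
    (hf'0 : ∀ s t' a y', 0 ≤ f' s t' a y') (hf'1 : ∀ s t' a, ∑ y', f' s t' a y' = 1)
    (q : S → S → ℝ) (hq0 : ∀ s t, 0 ≤ q s t) (hq1 : ∀ s, ∑ t, q s t = 1)
    (T : S → S → S)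
    (hT : ∀ s t, 0 < q s t → 0 < q s (T s t))
    (γ : S → S → Y' → ℝ) (hγ : ∀ s t y', 0 ≤ γ s t y')
    (φ : S → S → Y' → Y → ℝ)
    (hφ0 : ∀ s t y' y, 0 ≤ φ s t y' y) (hφ1 : ∀ s t y', ∑ y, φ s t y' y = 1)
    (hWG : ∀ s t, 0 < q s t → ∀ a y,
      f s t a y = ∑ y', γ s t y' * φ s t y' y * f' s (T s t) a y') :
    ∀ s : S, ∃ γs : S → Y' → ℝ, ∃ φs : S → Y' → S → Y → ℝ,
      (∀ t' y', 0 ≤ γs t' y') ∧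
      (∀ t' y' t y, 0 ≤ φs t' y' t y) ∧
      (∀ t' y', ∑ t, ∑ y, φs t' y' t y = 1) ∧
      ∀ a : A, ∀ t y,
        f s t a y * q s t = ∑ t', ∑ y', γs t' y' * φs t' y' t y * (f' s t' a y' * q s t') := by
  intro s
  classical
  by_cases hY' : Nonempty Y'
  · by_cases hY : Nonempty Y
    · obtain ⟨y0⟩ := hY
      set D : S → Y' → ℝ := fun t' y' => ∑ t, (if T s t = t' then γ s t y' * q s t else 0)
        with hDdef
      have hD0 : ∀ t' y', 0 ≤ D t' y' := by
        intro t' y'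
        apply Finset.sum_nonneg
        intro t _
        split
        · exact mul_nonneg (hγ s t y') (hq0 s t)
        · exact le_refl 0
      have hDzero : ∀ t' y', ¬ 0 < D t' y' → ∀ t, T s t = t' → γ s t y' * q s t = 0 := by
        intro t' y' hnd t ht
        have hDeq : D t' y' = 0 := le_antisymm (not_lt.mp hnd) (hD0 t' y')
        have hall := (Finset.sum_eq_zero_iff_of_nonneg (by
          intro i _
          split
          · exact mul_nonneg (hγ s i y') (hq0 s i)
          · exact le_refl 0)).mp hDeq t (Finset.mem_univ t)
        rwa [if_pos ht] at hall
      refine ⟨fun t' y' => if 0 < q s t' then D t' y' / q s t' else 0,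
        fun t' y' t y => if 0 < D t' y' then
            (if T s t = t' then γ s t y' * φ s t y' y * q s t / D t' y' else 0)
          else (if t = t' ∧ y = y0 then 1 else 0), ?_, ?_, ?_, ?_⟩
      · intro t' y'
        dsimp only
        split
        · exact div_nonneg (hD0 t' y') (le_of_lt (by assumption))
        · exact le_refl 0
      · intro t' y' t y
        dsimp only
        split
        · split
          · exact div_nonneg (mul_nonneg (mul_nonneg (hγ s t y') (hφ0 s t y' y)) (hq0 s t))
              (hD0 t' y')
          · exact le_refl 0
        · split
          · exact zero_le_one
          · exact le_refl 0
      · intro t' y'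
        dsimp only
        by_cases hd : 0 < D t' y'
        · simp only [if_pos hd]
          have hinner : ∀ t, ∑ y, (if T s t = t' then γ s t y' * φ s t y' y * q s t / D t' y' else 0)
              = if T s t = t' then γ s t y' * q s t / D t' y' else 0 := by
            intro t
            split
            · calc ∑ y, γ s t y' * φ s t y' y * q s t / D t' y'
                  = ∑ y, (γ s t y' * q s t / D t' y') * φ s t y' y := by
                    apply Finset.sum_congr rfl; intros; ring
                _ = (γ s t y' * q s t / D t' y') * ∑ y, φ s t y' y := (Finset.mul_sum _ _ _).symm
                _ = γ s t y' * q s t / D t' y' := by rw [hφ1]; ring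
            · simp
          rw [Finset.sum_congr rfl (fun t _ => hinner t)]
          have : ∀ t, (if T s t = t' then γ s t y' * q s t / D t' y' else 0)
              = (if T s t = t' then γ s t y' * q s t else 0) / D t' y' := by
            intro t; split <;> simp
          rw [Finset.sum_congr rfl (fun t _ => this t), ← Finset.sum_div]
          exact div_self (ne_of_gt hd)
        · simp only [if_neg hd]
          have : ∀ t, ∑ y, (if t = t' ∧ y = y0 then (1:ℝ) else 0)
              = if t = t' then 1 else 0 := by
            intro t
            simp only [ite_and]
            split
            · simp
            · simp
          rw [Finset.sum_congr rfl (fun t _ => this t)]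
          simp
      · intro a t y
        dsimp only
        have hterm : ∀ t' y', (if 0 < q s t' then D t' y' / q s t' else 0) *
            (if 0 < D t' y' then
              (if T s t = t' then γ s t y' * φ s t y' y * q s t / D t' y' else 0)
            else (if t = t' ∧ y = y0 then 1 else 0)) * (f' s t' a y' * q s t')
            = if T s t = t' then γ s t y' * φ s t y' y * f' s (T s t) a y' * q s t else 0 := by
          intro t' y'
          by_cases hq' : 0 < q s t'
          · by_cases hd : 0 < D t' y'
            · rw [if_pos hq', if_pos hd]
              by_cases hTt : T s t = t'
              · rw [if_pos hTt, if_pos hTt]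
                subst hTt
                field_simp
              · rw [if_neg hTt, if_neg hTt]; ring
            · have hDeq : D t' y' = 0 := le_antisymm (not_lt.mp hd) (hD0 t' y')
              rw [if_pos hq', if_neg hd, hDeq]
              simp only [zero_div, zero_mul]
              symm
              by_cases hTt : T s t = t'
              · rw [if_pos hTt]
                have h0 : γ s t y' * q s t = 0 := hDzero t' y' hd t hTt
                have hrw : γ s t y' * φ s t y' y * f' s (T s t) a y' * q s t
                    = (γ s t y' * q s t) * (φ s t y' y * f' s (T s t) a y') := by ring
                rw [hrw, h0, zero_mul]
              · rw [if_neg hTt]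
          · rw [if_neg hq']
            simp only [zero_mul]
            symm
            by_cases hTt : T s t = t'
            · have hqt : q s t = 0 := by
                by_contra h
                have hpos : 0 < q s t := lt_of_le_of_ne (hq0 s t) (Ne.symm h)
                exact hq' (hTt ▸ hT s t hpos)
              rw [if_pos hTt, hqt, mul_zero]
            · rw [if_neg hTt]
        rw [Finset.sum_congr rfl (fun t' _ => Finset.sum_congr rfl (fun y' _ => hterm t' y'))]
        rw [Finset.sum_comm]
        have hcoll : ∀ y', ∑ t', (if T s t = t' then
            γ s t y' * φ s t y' y * f' s (T s t) a y' * q s t else 0)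
            = γ s t y' * φ s t y' y * f' s (T s t) a y' * q s t := by
          intro y'
          rw [Finset.sum_ite_eq]
          simp
        rw [Finset.sum_congr rfl (fun y' _ => hcoll y')]
        by_cases hqt : 0 < q s t
        · rw [hWG s t hqt a y, Finset.sum_mul]
        · have hq0' : q s t = 0 := le_antisymm (not_lt.mp hqt) (hq0 s t)
          simp [hq0']
    · exfalso
      haveI := not_nonempty_iff.mp hY
      obtain ⟨y'⟩ := hY'
      simpa using hφ1 s s y'
  · haveI := not_nonempty_iff.mp hY'
    refine ⟨fun _ _ => 0, fun _ _ _ _ => 0, fun _ _ => le_refl 0,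
      fun _ _ _ _ => le_refl 0, fun t' y' => isEmptyElim y', ?_⟩
    intro a t y
    exact absurd (hf'1 s s a) (by simp)
end

section
/- Blackwell's theorem for binary-state experiments (garbling direction used in the paper): Let Θ = {0, 1} with prior (1/2, 1/2), and let experiments P : Θ → Δ(Z) and P' : Θ → Δ(Z') be given on finite sets Z, Z'. If the distribution of posterior beliefs about state 1 induced by P' is a mean-preserving spread of the distribution of posterior beliefs induced by P, then P is a garbling of P': there exists a stochastic kernel φ : Z' → Δ(Z) such that P(z|θ) = Σ_{z'∈Z'} φ(z|z') P'(z'|θ) for all z ∈ Z and both θ ∈ Θ. -/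
open Finset

private lemma aux_le (a b c d v : ℝ) (ha : 0 ≤ a) (hb : 0 ≤ b)
    (h : (1 - b / (a + b)) * c + (b / (a + b)) * d ≤ v) :
    a * c + b * d ≤ (a + b) * v := by
  rcases eq_or_lt_of_le (add_nonneg ha hb) with hab | hab
  · have ha0 : a = 0 := by linarith
    have hb0 : b = 0 := by linarith
    simp [ha0, hb0]
  · have key : a * c + b * d = (a + b) * ((1 - b / (a + b)) * c + (b / (a + b)) * d) := by
      field_simp
      ring
    rw [key]
    exact mul_le_mul_of_nonneg_left h hab.le

private lemma aux_eq (a b c d v : ℝ) (ha : 0 ≤ a) (hb : 0 ≤ b)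
    (h : (1 - b / (a + b)) * c + (b / (a + b)) * d = v) :
    (a + b) * v = a * c + b * d := by
  rcases eq_or_lt_of_le (add_nonneg ha hb) with hab | hab
  · have ha0 : a = 0 := by linarith
    have hb0 : b = 0 := by linarith
    simp [ha0, hb0]
  · rw [← h]
    field_simp
    ring

private lemma sup'_affine_convexOn {Z : Type} [Fintype Z]
    (hZ : (Finset.univ : Finset Z).Nonempty) (c d : Z → ℝ) :
    ConvexOn ℝ (Set.Icc (0 : ℝ) 1)
      (fun p => Finset.univ.sup' hZ fun z => (1 - p) * c z + p * d z) := by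
  refine ⟨convex_Icc 0 1, ?_⟩
  intro x _ y _ a b ha hb hab
  simp only [smul_eq_mul]
  obtain ⟨z0, _, h0⟩ :=
    Finset.exists_mem_eq_sup' hZ (fun z => (1 - (a * x + b * y)) * c z + (a * x + b * y) * d z)
  rw [h0]
  have e1 : (1 - (a * x + b * y)) * c z0 + (a * x + b * y) * d z0 =
      a * ((1 - x) * c z0 + x * d z0) + b * ((1 - y) * c z0 + y * d z0) := by
    linear_combination (-(c z0)) * hab
  rw [e1]
  gcongr
  · exact Finset.le_sup' (fun z => (1 - x) * c z + x * d z) (Finset.mem_univ z0)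
  · exact Finset.le_sup' (fun z => (1 - y) * c z + y * d z) (Finset.mem_univ z0)

theorem stmt_10 {Z Z' : Type} [Fintype Z] [Fintype Z']
    (P : Bool → Z → ℝ) (P' : Bool → Z' → ℝ)
    (hP0 : ∀ θ z, 0 ≤ P θ z) (hP1 : ∀ θ, ∑ z, P θ z = 1)
    (hP'0 : ∀ θ z', 0 ≤ P' θ z') (hP'1 : ∀ θ, ∑ z', P' θ z' = 1)
    (hmps : ∀ φ : ℝ → ℝ, ConvexOn ℝ (Set.Icc (0 : ℝ) 1) φ →
      ∑ z, ((P false z + P true z) / 2) * φ (P true z / (P false z + P true z)) ≤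
        ∑ z', ((P' false z' + P' true z') / 2) * φ (P' true z' / (P' false z' + P' true z'))) :
    ∃ k : Z' → Z → ℝ, (∀ z' z, 0 ≤ k z' z) ∧ (∀ z', ∑ z, k z' z = 1) ∧
      ∀ θ z, P θ z = ∑ z', k z' z * P' θ z' := by
  classical
  have hZne : (Finset.univ : Finset Z).Nonempty := by
    rcases (Finset.univ : Finset Z).eq_empty_or_nonempty with h | h
    · exfalso
      have h1 := hP1 true
      rw [h, Finset.sum_empty] at h1
      norm_num at h1
    · exact h
  set S : Set (Z' → Z → ℝ) :=
    {k | (∀ z' z, k z' z ∈ Set.Icc (0 : ℝ) 1) ∧ ∀ z', ∑ z, k z' z = 1} with hSdef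
  let T : (Z' → Z → ℝ) →ₗ[ℝ] ((Bool × Z) → ℝ) :=
    { toFun := fun k i => ∑ z', k z' i.2 * P' i.1 z'
      map_add' := by
        intro a b; funext i; simp [add_mul, Finset.sum_add_distrib]
      map_smul' := by
        intro c a; funext i; simp [Finset.mul_sum, mul_assoc] }
  set Pf : (Bool × Z) → ℝ := fun i => P i.1 i.2 with hPfdef
  suffices hmem : Pf ∈ T '' S by
    obtain ⟨k, hkS, hk⟩ := hmem
    refine ⟨k, fun z' z => (hkS.1 z' z).1, hkS.2, fun θ z => ?_⟩
    have := congrFun hk (θ, z)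
    exact this.symm
  by_contra hc
  -- convexity of S
  have hSconv : Convex ℝ S := by
    intro k1 h1 k2 h2 a b ha hb hab
    constructor
    · intro z' z
      have i1 := h1.1 z' z
      have i2 := h2.1 z' z
      simp only [Set.mem_Icc] at i1 i2 ⊢
      constructor
      · have := add_nonneg (mul_nonneg ha i1.1) (mul_nonneg hb i2.1)
        simpa using this
      · have : a * k1 z' z + b * k2 z' z ≤ a * 1 + b * 1 := by
          gcongr
          · exact i1.2
          · exact i2.2
        simpa [hab] using this.trans_eq (by linarith)
    · intro z'
      have e : ∑ z, (a • k1 + b • k2) z' z = a * (∑ z, k1 z' z) + b * (∑ z, k2 z' z) := by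
        simp [Finset.mul_sum, Finset.sum_add_distrib]
      rw [e, h1.2 z', h2.2 z']
      simpa using hab
  -- compactness of S
  have hSclosed : IsClosed S := by
    have h1 : IsClosed {k : Z' → Z → ℝ | ∀ z' z, k z' z ∈ Set.Icc (0 : ℝ) 1} := by
      have : {k : Z' → Z → ℝ | ∀ z' z, k z' z ∈ Set.Icc (0 : ℝ) 1} =
          ⋂ z', ⋂ z, (fun k : Z' → Z → ℝ => k z' z) ⁻¹' Set.Icc (0 : ℝ) 1 := by
        ext k; simp
      rw [this]
      exact isClosed_iInter fun z' => isClosed_iInter fun z =>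
        IsClosed.preimage ((continuous_apply z).comp (continuous_apply z')) isClosed_Icc
    have h2 : IsClosed {k : Z' → Z → ℝ | ∀ z', ∑ z, k z' z = 1} := by
      have : {k : Z' → Z → ℝ | ∀ z', ∑ z, k z' z = 1} =
          ⋂ z', {k : Z' → Z → ℝ | ∑ z, k z' z = 1} := by
        ext k; simp
      rw [this]
      exact isClosed_iInter fun z' =>
        isClosed_eq (continuous_finset_sum _ fun z _ =>
          (continuous_apply z).comp (continuous_apply z')) continuous_const
    have : S = {k : Z' → Z → ℝ | ∀ z' z, k z' z ∈ Set.Icc (0 : ℝ) 1} ∩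
        {k : Z' → Z → ℝ | ∀ z', ∑ z, k z' z = 1} := by
      ext k; simp [hSdef, Set.mem_setOf_eq]
    rw [this]
    exact h1.inter h2
  have hScomp : IsCompact S := by
    have hbox : IsCompact (Set.pi Set.univ fun _ : Z' =>
        Set.pi Set.univ fun _ : Z => Set.Icc (0 : ℝ) 1) :=
      isCompact_univ_pi fun _ => isCompact_univ_pi fun _ => isCompact_Icc
    refine hbox.of_isClosed_subset hSclosed ?_
    intro k hk
    intro z' _
    intro z _
    exact hk.1 z' z
  have hTcont : Continuous T := by
    apply continuous_pi
    intro i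
    exact continuous_finset_sum _ fun z' _ => by
      fun_prop
  have hCconv : Convex ℝ (T '' S) := hSconv.linear_image T
  have hCclosed : IsClosed (T '' S) := (hScomp.image hTcont).isClosed
  obtain ⟨f, u, hfu, huP⟩ := geometric_hahn_banach_closed_point hCconv hCclosed hc
  -- the dual coefficients
  set L : Bool × Z → ℝ := fun i => f (fun j => if i = j then 1 else 0) with hLdef
  have hfexp : ∀ x : (Bool × Z) → ℝ, f x = ∑ θ : Bool, ∑ z : Z, x (θ, z) * L (θ, z) := by
    intro x
    have h := (f : ((Bool × Z) → ℝ) →ₗ[ℝ] ℝ).pi_apply_eq_sum_univ x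
    simpa [Fintype.sum_prod_type, smul_eq_mul, hLdef] using h
  set c : Z → ℝ := fun z => L (false, z) with hcdef
  set d : Z → ℝ := fun z => L (true, z) with hddef
  set φ : ℝ → ℝ := fun p => Finset.univ.sup' hZne fun z => (1 - p) * c z + p * d z with hφdef
  have hφconv : ConvexOn ℝ (Set.Icc (0 : ℝ) 1) φ := sup'_affine_convexOn hZne c d
  -- choose argmax for each z'
  have hchoice : ∀ z' : Z', ∃ z0 : Z,
      φ (P' true z' / (P' false z' + P' true z')) =
        (1 - P' true z' / (P' false z' + P' true z')) * c z0 +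
          (P' true z' / (P' false z' + P' true z')) * d z0 := by
    intro z'
    obtain ⟨z0, _, h0⟩ := Finset.exists_mem_eq_sup' hZne
      (fun z => (1 - P' true z' / (P' false z' + P' true z')) * c z +
        (P' true z' / (P' false z' + P' true z')) * d z)
    exact ⟨z0, h0⟩
  choose zh hzh using hchoice
  set kstar : Z' → Z → ℝ := fun z' z => if z = zh z' then 1 else 0 with hkstardef
  have hkstarS : kstar ∈ S := by
    constructor
    · intro z' z
      simp only [hkstardef]
      split <;> norm_num
    · intro z'
      simp [hkstardef]
  -- value of f at P
  have h1 : f Pf ≤ ∑ z, (P false z + P true z) * φ (P true z / (P false z + P true z)) := by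
    rw [hfexp]
    rw [Fintype.sum_bool]
    rw [← Finset.sum_add_distrib]
    apply Finset.sum_le_sum
    intro z _
    have := aux_le (P false z) (P true z) (c z) (d z)
      (φ (P true z / (P false z + P true z))) (hP0 false z) (hP0 true z)
      (by rw [hφdef]
          exact Finset.le_sup' (fun w => (1 - P true z / (P false z + P true z)) * c w +
            (P true z / (P false z + P true z)) * d w) (Finset.mem_univ z))
    calc Pf (true, z) * L (true, z) + Pf (false, z) * L (false, z)
        = P false z * c z + P true z * d z := by
          simp only [hPfdef, hcdef, hddef]; ring
      _ ≤ (P false z + P true z) * φ (P true z / (P false z + P true z)) := this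
  -- value of f at T kstar
  have h3 : ∑ z', (P' false z' + P' true z') * φ (P' true z' / (P' false z' + P' true z')) =
      f (T kstar) := by
    rw [hfexp]
    rw [Fintype.sum_bool]
    have e1 : ∀ θ : Bool, ∑ z : Z, (T kstar) (θ, z) * L (θ, z) =
        ∑ z' : Z', P' θ z' * L (θ, zh z') := by
      intro θ
      have : ∀ z : Z, (T kstar) (θ, z) * L (θ, z) =
          ∑ z' : Z', (if z = zh z' then P' θ z' * L (θ, z) else 0) := by
        intro z
        show (∑ z', kstar z' z * P' θ z') * L (θ, z) = _
        rw [Finset.sum_mul]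
        apply Finset.sum_congr rfl
        intro z' _
        simp only [hkstardef]
        split <;> simp
      rw [Finset.sum_congr rfl fun z _ => this z]
      rw [Finset.sum_comm]
      apply Finset.sum_congr rfl
      intro z' _
      rw [Finset.sum_ite_eq' Finset.univ (zh z') (fun z => P' θ z' * L (θ, z))]
      simp
    rw [e1 true, e1 false, ← Finset.sum_add_distrib]
    apply Finset.sum_congr rfl
    intro z' _
    have := aux_eq (P' false z') (P' true z') (c (zh z')) (d (zh z'))
      (φ (P' true z' / (P' false z' + P' true z'))) (hP'0 false z') (hP'0 true z')
      (hzh z').symm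
    calc (P' false z' + P' true z') * φ (P' true z' / (P' false z' + P' true z'))
        = P' false z' * c (zh z') + P' true z' * d (zh z') := this
      _ = P' true z' * L (true, zh z') + P' false z' * L (false, zh z') := by
          simp only [hcdef, hddef]; ring
  -- the mean-preserving-spread inequality
  have h2 : ∑ z, (P false z + P true z) * φ (P true z / (P false z + P true z)) ≤
      ∑ z', (P' false z' + P' true z') * φ (P' true z' / (P' false z' + P' true z')) := by
    have hm := hmps φ hφconv
    have e1 : ∑ z, (P false z + P true z) * φ (P true z / (P false z + P true z)) =
        2 * ∑ z, ((P false z + P true z) / 2) * φ (P true z / (P false z + P true z)) := by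
      rw [Finset.mul_sum]
      exact Finset.sum_congr rfl fun z _ => by ring
    have e2 : ∑ z', (P' false z' + P' true z') * φ (P' true z' / (P' false z' + P' true z')) =
        2 * ∑ z', ((P' false z' + P' true z') / 2) * φ (P' true z' / (P' false z' + P' true z')) := by
      rw [Finset.mul_sum]
      exact Finset.sum_congr rfl fun z' _ => by ring
    rw [e1, e2]
    linarith
  have hlt : f (T kstar) < u := hfu (T kstar) ⟨kstar, hkstarS, rfl⟩
  linarith
end

section
/- Let P, P' be binary experiments on Θ = {N, N−1} with finite signal sets, and suppose P is a weighted garbling of P': there exist γ^{z'} ≥ 0 and φ(·|z') ∈ Δ(Z), all φ(·|z') with common support D ⊆ Z equal to the common support of P(·|N) and P(·|N−1), such that P(z|θ) = Σ_{z'} γ^{z'} φ(z|z') P'(z'|θ) for all z ∈ Z and θ ∈ {N, N−1}. If the likelihood ratios of P satisfy −∞ < L_ ≤ P(z|N)/P(z|N−1) ≤ L̄ < ∞ for all z ∈ D with L_ < L̄, then there exist signals z'₁, z'₂ with γ^{z'₁}, γ^{z'₂} > 0 and P'(z'₁|N)/P'(z'₁|N−1) < P(z|N)/P(z|N−1) <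 P'(z'₂|N)/P'(z'₂|N−1) for every z ∈ D; consequently the closed likelihood-ratio interval [L_, L̄] of P is contained in the open likelihood-ratio interval of P'. -/
open Finset

theorem stmt_14 {Z Z' : Type} [Fintype Z] [Fintype Z']
    (P : Bool → Z → ℝ) (P' : Bool → Z' → ℝ)
    (hP0 : ∀ θ z, 0 ≤ P θ z) (hP1 : ∀ θ, ∑ z, P θ z = 1)
    (hP'0 : ∀ θ z', 0 ≤ P' θ z') (hP'1 : ∀ θ, ∑ z', P' θ z' = 1)
    (γ : Z' → ℝ) (hγ : ∀ z', 0 ≤ γ z')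
    (hγfull : ∀ z', 0 < γ z' → 0 < P' false z')
    (φ : Z' → Z → ℝ) (hφ0 : ∀ z' z, 0 ≤ φ z' z) (hφ1 : ∀ z', ∑ z, φ z' z = 1)
    -- common support: every kernel φ(·|z') has support equal to the common support
    -- D = {z : P(z|N) > 0} = {z : P(z|N−1) > 0} of P(·|N) and P(·|N−1)
    (hsupp : ∀ z, 0 < P true z ↔ 0 < P false z)
    (hφsupp : ∀ z' z, 0 < φ z' z ↔ 0 < P false z)
    (hWG : ∀ θ z, P θ z = ∑ z', γ z' * φ z' z * P' θ z')
    (Llo Lhi : ℝ) (hLlt : Llo < Lhi)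
    (hbounds : ∀ z, 0 < P false z → Llo ≤ P true z / P false z ∧ P true z / P false z ≤ Lhi)
    (hattlo : ∃ z, 0 < P false z ∧ P true z / P false z = Llo)
    (hatthi : ∃ z, 0 < P false z ∧ P true z / P false z = Lhi) :
    ∃ z'₁ z'₂ : Z', 0 < γ z'₁ ∧ 0 < γ z'₂ ∧
      (∀ z, 0 < P false z →
        P' true z'₁ / P' false z'₁ < P true z / P false z ∧
        P true z / P false z < P' true z'₂ / P' false z'₂) ∧
      P' true z'₁ / P' false z'₁ < Llo ∧ Lhi < P' true z'₂ / P' false z'₂ := by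
  classical
  set r : Z' → ℝ := fun z' => P' true z' / P' false z' with hr
  set w : Z' → Z → ℝ := fun z' z => γ z' * φ z' z * P' false z' with hw
  have hw0 : ∀ z' z, 0 ≤ w z' z := fun z' z =>
    mul_nonneg (mul_nonneg (hγ z') (hφ0 z' z)) (hP'0 false z')
  have hwpos : ∀ z' z, 0 < γ z' → 0 < P false z → 0 < w z' z := fun z' z hg hz =>
    mul_pos (mul_pos hg ((hφsupp z' z).2 hz)) (hγfull z' hg)
  have hA : ∀ z, P false z = ∑ z', w z' z := hWG false
  have hB : ∀ z, P true z = ∑ z', w z' z * r z' := by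
    intro z
    rw [hWG true z]
    refine Finset.sum_congr rfl fun z' _ => ?_
    rcases eq_or_lt_of_le (hγ z') with hg | hg
    · simp [hw, ← hg]
    · have hpf : P' false z' ≠ 0 := (hγfull z' hg).ne'
      simp only [hw, hr]
      rw [mul_assoc (γ z' * φ z' z), mul_div_cancel₀ (P' true z') hpf]
  -- key forcing lemma (lower version)
  have keylo : ∀ (c : ℝ) (za zb : Z), 0 < P false za → 0 < P false zb →
      P true za / P false za = c → (∀ z', 0 < γ z' → c ≤ r z') →
      P true zb / P false zb = c := by
    intro c za zb hza hzb hca hall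
    have hta : P true za = c * P false za := by
      field_simp at hca; linarith [hca]
    have hsum0 : ∑ z', w z' za * (r z' - c) = 0 := by
      have h1 : ∑ z', w z' za * (r z' - c)
          = (∑ z', w z' za * r z') - (∑ z', w z' za) * c := by
        rw [Finset.sum_mul, ← Finset.sum_sub_distrib]
        exact Finset.sum_congr rfl fun z' _ => by ring
      rw [h1, ← hB, ← hA]; linarith
    have hterm0 : ∀ z' ∈ Finset.univ, w z' za * (r z' - c) = 0 := by
      rw [← Finset.sum_eq_zero_iff_of_nonneg]
      · exact hsum0
      · intro z' _
        rcases eq_or_lt_of_le (hγ z') with hg | hg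
        · simp [hw, ← hg]
        · exact mul_nonneg (hw0 z' za) (sub_nonneg.2 (hall z' hg))
    have hreq : ∀ z', 0 < γ z' → r z' = c := by
      intro z' hg
      have h0 := hterm0 z' (Finset.mem_univ z')
      rcases mul_eq_zero.1 h0 with h | h
      · exact absurd h (hwpos z' za hg hza).ne'
      · linarith
    have htb : P true zb = c * P false zb := by
      rw [hB zb, hA zb, Finset.mul_sum]
      refine Finset.sum_congr rfl fun z' _ => ?_
      rcases eq_or_lt_of_le (hγ z') with hg | hg
      · simp [hw, ← hg]
      · rw [hreq z' hg]; ring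
    rw [htb, mul_div_assoc, div_self hzb.ne', mul_one]
  -- key forcing lemma (upper version)
  have keyhi : ∀ (c : ℝ) (za zb : Z), 0 < P false za → 0 < P false zb →
      P true za / P false za = c → (∀ z', 0 < γ z' → r z' ≤ c) →
      P true zb / P false zb = c := by
    intro c za zb hza hzb hca hall
    have hta : P true za = c * P false za := by
      field_simp at hca; linarith [hca]
    have hsum0 : ∑ z', w z' za * (c - r z') = 0 := by
      have h1 : ∑ z', w z' za * (c - r z')
          = (∑ z', w z' za) * c - (∑ z', w z' za * r z') := by
        rw [Finset.sum_mul, ← Finset.sum_sub_distrib]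
        exact Finset.sum_congr rfl fun z' _ => by ring
      rw [h1, ← hB, ← hA]; linarith
    have hterm0 : ∀ z' ∈ Finset.univ, w z' za * (c - r z') = 0 := by
      rw [← Finset.sum_eq_zero_iff_of_nonneg]
      · exact hsum0
      · intro z' _
        rcases eq_or_lt_of_le (hγ z') with hg | hg
        · simp [hw, ← hg]
        · exact mul_nonneg (hw0 z' za) (sub_nonneg.2 (hall z' hg))
    have hreq : ∀ z', 0 < γ z' → r z' = c := by
      intro z' hg
      have h0 := hterm0 z' (Finset.mem_univ z')
      rcases mul_eq_zero.1 h0 with h | h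
      · exact absurd h (hwpos z' za hg hza).ne'
      · linarith
    have htb : P true zb = c * P false zb := by
      rw [hB zb, hA zb, Finset.mul_sum]
      refine Finset.sum_congr rfl fun z' _ => ?_
      rcases eq_or_lt_of_le (hγ z') with hg | hg
      · simp [hw, ← hg]
      · rw [hreq z' hg]; ring
    rw [htb, mul_div_assoc, div_self hzb.ne', mul_one]
  obtain ⟨z1, hz1, hL1⟩ := hattlo
  obtain ⟨z2, hz2, hL2⟩ := hatthi
  have claim1 : ∃ z', 0 < γ z' ∧ r z' < Llo := by
    by_contra h
    push_neg at h
    have := keylo Llo z1 z2 hz1 hz2 hL1 h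
    rw [hL2] at this; linarith
  have claim2 : ∃ z', 0 < γ z' ∧ Lhi < r z' := by
    by_contra h
    push_neg at h
    have := keyhi Lhi z2 z1 hz2 hz1 hL2 h
    rw [hL1] at this; linarith
  obtain ⟨z'₁, hg1, hr1⟩ := claim1
  obtain ⟨z'₂, hg2, hr2⟩ := claim2
  refine ⟨z'₁, z'₂, hg1, hg2, ?_, hr1, hr2⟩
  intro z hz
  obtain ⟨h1, h2⟩ := hbounds z hz
  exact ⟨lt_of_lt_of_le hr1 h1, lt_of_le_of_lt h2 hr2⟩
end

section
/- Let v⁻, v⁺, z ∈ ℝ with v⁻ + ε₀ < z < v⁺ − ε₀ for some ε₀ > 0, and κ₀ ≥ max(|z − v⁻|, |z − v⁺|). Fix n with ε₀(n−1)/2 > 2κ₀|S| for a finite set S, and δ ∈ (0,1) with 1 − δ^{n−1} ≥ (n−1)(1−δ)/2. For λ ∈ {−1, +1}, define w = z + ((1−δ^{n−1})/δ^{n−1})(z − v^λ) + T where |T| ≤ 2|S|κ₀(1−δ)/δ^{n−1} and v^{+1} = v⁺, v^{−1} = v⁻. Then λ·w < λ·z. -/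
theorem stmt_17 (vm vp z ε₀ κ₀ : ℝ) (hε : 0 < ε₀)
    (hzlo : vm + ε₀ < z) (hzhi : z < vp - ε₀)
    (hκ : max |z - vm| |z - vp| ≤ κ₀)
    (cardS : ℕ) (n : ℕ)
    (hn : ε₀ * ((n : ℝ) - 1) / 2 > 2 * κ₀ * (cardS : ℝ))
    (δ : ℝ) (hδ0 : 0 < δ) (hδ1 : δ < 1)
    (hgeo : 1 - δ ^ (n - 1) ≥ ((n : ℝ) - 1) * (1 - δ) / 2)
    (lam : ℝ) (hlam : lam = 1 ∨ lam = -1)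
    (v : ℝ) (hv : v = if lam = 1 then vp else vm)
    (T : ℝ) (hT : |T| ≤ 2 * (cardS : ℝ) * κ₀ * (1 - δ) / δ ^ (n - 1))
    (w : ℝ) (hw : w = z + ((1 - δ ^ (n - 1)) / δ ^ (n - 1)) * (z - v) + T) :
    lam * w < lam * z := by
  set p : ℝ := δ ^ (n - 1) with hpdef
  have hp : 0 < p := pow_pos hδ0 _
  have hp1 : p ≤ 1 := pow_le_one₀ hδ0.le hδ1.le
  have hS : (0:ℝ) ≤ (cardS : ℝ) := Nat.cast_nonneg _
  have h1δ : 0 < 1 - δ := by linarith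
  have habsT := abs_le.mp hT
  have hzv : lam * (z - v) ≤ -ε₀ := by
    rcases hlam with h | h <;> subst h <;> norm_num at hv <;> subst hv <;> linarith
  have hlamT : lam * T ≤ 2 * (cardS : ℝ) * κ₀ * (1 - δ) / p := by
    rcases hlam with h | h <;> subst h <;> linarith [habsT.1, habsT.2]
  have hc : 0 ≤ (1 - p) / p := div_nonneg (by linarith) hp.le
  have h2 : ((1 - p) / p) * (lam * (z - v)) ≤ ((1 - p) / p) * (-ε₀) :=
    mul_le_mul_of_nonneg_left hzv hc
  have hkey : 2 * (cardS : ℝ) * κ₀ * (1 - δ) < ε₀ * (1 - p) := by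
    nlinarith [mul_pos hε h1δ, hgeo, hn]
  have hfin : ((1 - p) / p) * (-ε₀) + 2 * (cardS : ℝ) * κ₀ * (1 - δ) / p < 0 := by
    have : ((1 - p) * (-ε₀) + 2 * (cardS : ℝ) * κ₀ * (1 - δ)) / p < 0 :=
      div_neg_of_neg_of_pos (by nlinarith) hp
    calc ((1 - p) / p) * (-ε₀) + 2 * (cardS : ℝ) * κ₀ * (1 - δ) / p
        = ((1 - p) * (-ε₀) + 2 * (cardS : ℝ) * κ₀ * (1 - δ)) / p := by ring
      _ < 0 := this
  have heq : lam * w - lam * z = ((1 - p) / p) * (lam * (z - v)) + lam * T := by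
    subst hw; ring
  linarith
end
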